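/- (Section 9, first displayed identity; case where the unique missing spectral number is the maximal one.) Let c be a positive integer, set τ := c + 14, and let T be the finite family of τ rational numbers consisting of 5/12, 11/12, 13/12 together with 1/2 + k/(c+12) for k = 1, 2, …, c+11. Then min T = 5/12, max T = 3/2 − 1/(c+12), and with av_T := (1/τ)·Σ_{x∈T} x one has Σ_{x∈T}(x − av_T)² − (τ/12)·(max T − min T) = −(c³ + 37c² + 455c + 1764)/(144c² + 3744c + 24192). In particular this quantity is negative for every positive integer c, so δ_T < 0. -/

import Mathlib

private lemma sum1' (d : ℝ) (n : ℕ) :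
    ∑ k ∈ Finset.Icc 1 n, (1/2 + (k:ℝ)/d) = (n:ℝ)/2 + ((n:ℝ)*((n:ℝ)+1)/2)/d := by
  induction n with
  | zero => simp
  | succ m ih =>
    rw [Finset.sum_Icc_succ_top (Nat.succ_le_succ (Nat.zero_le m)), ih]
    push_cast; ring

private lemma sumsq' (a d : ℝ) (n : ℕ) :
    ∑ k ∈ Finset.Icc 1 n, (1/2 + (k:ℝ)/d - a)^2
      = (n:ℝ)*(1/2-a)^2 + (1/2-a)*((n:ℝ)*((n:ℝ)+1))/d
        + ((n:ℝ)*((n:ℝ)+1)*(2*(n:ℝ)+1)/6)/d^2 := by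
  induction n with
  | zero => simp
  | succ m ih =>
    rw [Finset.sum_Icc_succ_top (Nat.succ_le_succ (Nat.zero_le m)), ih]
    push_cast; ring

set_option maxHeartbeats 1000000 in
theorem stmt8 (c : ℕ) (hc : 0 < c) (τ : ℕ) (hτ : τ = c + 14)
    (T : Multiset ℝ)
    (hT : T = ({5/12, 11/12, 13/12} : Multiset ℝ)
      + Multiset.map (fun k : ℕ => 1/2 + (k : ℝ) / ((c : ℝ) + 12)) (Finset.Icc 1 (c + 11)).val)
    (avT : ℝ) (havT : avT = (1 / (τ : ℝ)) * T.sum) :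
    T.card = τ ∧
    (5/12 : ℝ) ∈ T ∧ (∀ x ∈ T, (5/12 : ℝ) ≤ x) ∧
    (3/2 - 1/((c : ℝ) + 12)) ∈ T ∧ (∀ x ∈ T, x ≤ 3/2 - 1/((c : ℝ) + 12)) ∧
    (Multiset.map (fun x => (x - avT) ^ 2) T).sum
        - ((τ : ℝ) / 12) * ((3/2 - 1/((c : ℝ) + 12)) - 5/12)
      = -((c : ℝ) ^ 3 + 37 * (c : ℝ) ^ 2 + 455 * (c : ℝ) + 1764)
          / (144 * (c : ℝ) ^ 2 + 3744 * (c : ℝ) + 24192) ∧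
    (Multiset.map (fun x => (x - avT) ^ 2) T).sum
        - ((τ : ℝ) / 12) * ((3/2 - 1/((c : ℝ) + 12)) - 5/12) < 0 := by
  have hr : (1:ℝ) ≤ (c:ℝ) := by exact_mod_cast hc
  have hd : ((c:ℝ) + 12) ≠ 0 := by positivity
  have hdpos : (0:ℝ) < (c:ℝ) + 12 := by positivity
  have hτR : (τ:ℝ) = (c:ℝ) + 14 := by rw [hτ]; push_cast; ring
  have hτ0 : (τ:ℝ) ≠ 0 := by rw [hτR]; positivity
  -- card
  have hcard : T.card = τ := by
    rw [hT, hτ]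
    simp [Nat.card_Icc]
  -- sum of T
  have hsum : T.sum = 29/12 + (((c:ℕ)+11 : ℕ):ℝ)/2
      + ((((c:ℕ)+11 : ℕ):ℝ)*((((c:ℕ)+11 : ℕ):ℝ)+1)/2)/((c:ℝ)+12) := by
    rw [hT]
    rw [Multiset.sum_add]
    have : (Multiset.map (fun k : ℕ => 1/2 + (k : ℝ) / ((c : ℝ) + 12))
        (Finset.Icc 1 (c + 11)).val).sum
        = ∑ k ∈ Finset.Icc 1 (c+11), (1/2 + (k:ℝ)/((c:ℝ)+12)) := rfl
    rw [this, sum1']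
    simp only [Multiset.insert_eq_cons, Multiset.sum_cons, Multiset.sum_singleton]
    push_cast
    ring
  have hsum' : T.sum = 29/12 + ((c:ℝ)+11)/2
      + (((c:ℝ)+11)*(((c:ℝ)+12))/2)/((c:ℝ)+12) := by
    rw [hsum]; push_cast; ring_nf
  -- variance sum
  have hvar : (Multiset.map (fun x => (x - avT) ^ 2) T).sum
      = (5/12 - avT)^2 + (11/12 - avT)^2 + (13/12 - avT)^2
        + (((c:ℝ)+11)*(1/2-avT)^2 + (1/2-avT)*(((c:ℝ)+11)*(((c:ℝ)+11)+1))/((c:ℝ)+12)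
          + (((c:ℝ)+11)*(((c:ℝ)+11)+1)*(2*((c:ℝ)+11)+1)/6)/((c:ℝ)+12)^2) := by
    rw [hT, Multiset.map_add, Multiset.sum_add, Multiset.map_map]
    have h2 : (Multiset.map ((fun x => (x - avT) ^ 2) ∘
        (fun k : ℕ => 1/2 + (k : ℝ) / ((c : ℝ) + 12))) (Finset.Icc 1 (c + 11)).val).sum
        = ∑ k ∈ Finset.Icc 1 (c+11), (1/2 + (k:ℝ)/((c:ℝ)+12) - avT)^2 := rfl
    rw [h2, sumsq']
    simp only [Multiset.insert_eq_cons, Multiset.map_cons, Multiset.map_singleton,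
      Multiset.sum_cons, Multiset.sum_singleton]
    push_cast
    ring
  -- avT value
  rw [hsum'] at havT
  have hEQ : (Multiset.map (fun x => (x - avT) ^ 2) T).sum
        - ((τ : ℝ) / 12) * ((3/2 - 1/((c : ℝ) + 12)) - 5/12)
      = -((c : ℝ) ^ 3 + 37 * (c : ℝ) ^ 2 + 455 * (c : ℝ) + 1764)
          / (144 * (c : ℝ) ^ 2 + 3744 * (c : ℝ) + 24192) := by
    rw [hvar, havT, hτR]
    field_simp
    ring
  have hNEG : (Multiset.map (fun x => (x - avT) ^ 2) T).sum
        - ((τ : ℝ) / 12) * ((3/2 - 1/((c : ℝ) + 12)) - 5/12) < 0 := by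
    rw [hEQ, neg_div, neg_lt_zero]
    apply div_pos <;> nlinarith
  refine ⟨hcard, ?_, ?_, ?_, ?_, hEQ, hNEG⟩
  · rw [hT]; simp
  · intro x hx
    rw [hT] at hx
    rcases Multiset.mem_add.1 hx with h | h
    · simp only [Multiset.insert_eq_cons, Multiset.mem_cons, Multiset.mem_singleton] at h
      rcases h with rfl | rfl | rfl <;> norm_num
    · obtain ⟨k, hk, rfl⟩ := Multiset.mem_map.1 h
      have hk1 : 1 ≤ k := (Finset.mem_Icc.1 hk).1
      have : (0:ℝ) < (k:ℝ)/((c:ℝ)+12) := by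
        apply div_pos _ hdpos
        exact_mod_cast hk1
      linarith
  · rw [hT]
    refine Multiset.mem_add.2 (Or.inr ?_)
    refine Multiset.mem_map.2 ⟨c+11, ?_, ?_⟩
    · exact Finset.mem_val.mpr (Finset.mem_Icc.2 ⟨by omega, le_rfl⟩)
    · push_cast
      field_simp
      ring
  · intro x hx
    rw [hT] at hx
    have hle : 1/((c:ℝ)+12) ≤ 1/13 := by
      apply one_div_le_one_div_of_le <;> linarith
    rcases Multiset.mem_add.1 hx with h | h
    · simp only [Multiset.insert_eq_cons, Multiset.mem_cons, Multiset.mem_singleton] at h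
      rcases h with rfl | rfl | rfl <;> linarith
    · obtain ⟨k, hk, rfl⟩ := Multiset.mem_map.1 h
      have hk2 : (k:ℝ) ≤ (c:ℝ)+11 := by
        have := (Finset.mem_Icc.1 (Finset.mem_val.mp hk)).2
        push_cast
        exact_mod_cast this
      have : (k:ℝ)/((c:ℝ)+12) ≤ ((c:ℝ)+11)/((c:ℝ)+12) := by gcongr
      have heq : ((c:ℝ)+11)/((c:ℝ)+12) = 1 - 1/((c:ℝ)+12) := by
        field_simp
        ring
      linarith [this, heq ▸ this]
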